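/- Let f : E → ℝ be convex, differentiable with L-Lipschitz gradient, and let 0 < γ < 1/L. Then the map Id - γ∇f is firmly nonexpansive: for all x, y, ‖(x - γ∇f(x)) - (y - γ∇f(y))‖² + ‖γ∇f(x) - γ∇f(y)‖² ≤ ‖x - y‖². -/

import Mathlib

open scoped RealInnerProductSpace Topology

section Aux

variable {E : Type*} [NormedAddCommGroup E] [InnerProductSpace ℝ E] [CompleteSpace E]

/-- Derivative of `f` along a line. -/
lemma aux_line_deriv (f : E → ℝ) (f' : E → E) (hdiff : ∀ x, HasGradientAt f (f' x) x)
    (x v : E) (t : ℝ) :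
    HasDerivAt (fun s : ℝ => f (x + s • v)) ⟪f' (x + t • v), v⟫ t := by
  have h1 : HasDerivAt (fun s : ℝ => x + s • v) v t := by
    simpa using ((hasDerivAt_id t).smul_const v).const_add x
  have h2 := (hdiff (x + t • v)).hasFDerivAt.comp_hasDerivAt t h1
  simpa [InnerProductSpace.toDual_apply_apply, Function.comp_def] using h2

/-- Convexity gradient inequality. -/
lemma aux_grad_ineq (f : E → ℝ) (f' : E → E)
    (hconv : ConvexOn ℝ Set.univ f) (hdiff : ∀ x, HasGradientAt f (f' x) x)
    (x y : E) : f x + ⟪f' x, y - x⟫ ≤ f y := by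
  set v := y - x with hv
  have hder := aux_line_deriv f f' hdiff x v 0
  rw [show (0:ℝ) • v = 0 by simp, add_zero] at hder
  have hslope : Filter.Tendsto (slope (fun s : ℝ => f (x + s • v)) 0) (𝓝[>] 0)
      (𝓝 ⟪f' x, v⟫) :=
    (hasDerivAt_iff_tendsto_slope.1 hder).mono_left
      (nhdsWithin_mono 0 (fun t ht => ne_of_gt ht))
  have hle : ∀ᶠ t in 𝓝[>] (0:ℝ), slope (fun s : ℝ => f (x + s • v)) 0 t ≤ f y - f x := by
    filter_upwards [Ioo_mem_nhdsGT_of_mem (by constructor <;> norm_num : (0:ℝ) ∈ Set.Ico (0:ℝ) 1)] with t ht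
    have hcomb := hconv.2 (Set.mem_univ x) (Set.mem_univ y)
      (by linarith [ht.2] : (0:ℝ) ≤ 1 - t) (le_of_lt ht.1) (by ring)
    have hxt : x + t • v = (1 - t) • x + t • y := by
      rw [hv]; module
    rw [slope_def_field]
    have : f (x + t • v) ≤ (1 - t) * f x + t * f y := by
      rw [hxt]; simpa using hcomb
    simp only [zero_smul, add_zero, sub_zero]
    rw [div_le_iff₀ ht.1]
    nlinarith
  have := le_of_tendsto hslope hle
  linarith

/-- Descent lemma. -/
lemma aux_descent (f : E → ℝ) (f' : E → E) (L : ℝ) (hL : 0 < L)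
    (hdiff : ∀ x, HasGradientAt f (f' x) x)
    (hlip : ∀ x y, ‖f' x - f' y‖ ≤ L * ‖x - y‖)
    (x y : E) : f y ≤ f x + ⟪f' x, y - x⟫ + L / 2 * ‖y - x‖ ^ 2 := by
  set v := y - x with hv
  set h : ℝ → ℝ := fun t => f (x + t • v) - t * ⟪f' x, v⟫ - L / 2 * ‖v‖ ^ 2 * t ^ 2 with hh
  have hder : ∀ t : ℝ, HasDerivAt h
      (⟪f' (x + t • v), v⟫ - ⟪f' x, v⟫ - L / 2 * ‖v‖ ^ 2 * (2 * t)) t := by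
    intro t
    have hq : HasDerivAt (fun s : ℝ => s * ⟪f' x, v⟫) ⟪f' x, v⟫ t := by
      simpa using (hasDerivAt_id t).mul_const ⟪f' x, v⟫
    have hr : HasDerivAt (fun s : ℝ => L / 2 * ‖v‖ ^ 2 * s ^ 2)
        (L / 2 * ‖v‖ ^ 2 * (2 * t)) t := by
      exact ((hasDerivAt_pow 2 t).const_mul (L / 2 * ‖v‖ ^ 2)).congr_deriv (by
        push_cast; ring)
    exact ((aux_line_deriv f f' hdiff x v t).sub hq).sub hr
  have hanti : AntitoneOn h (Set.Icc 0 1) := by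
    apply antitoneOn_of_deriv_nonpos (convex_Icc 0 1)
    · exact fun t _ => (hder t).continuousAt.continuousWithinAt
    · exact fun t _ => ((hder t).differentiableAt).differentiableWithinAt
    · intro t ht
      rw [interior_Icc] at ht
      rw [(hder t).deriv]
      have h1 : ⟪f' (x + t • v) - f' x, v⟫ ≤ ‖f' (x + t • v) - f' x‖ * ‖v‖ :=
        real_inner_le_norm _ _
      have h2 : ‖f' (x + t • v) - f' x‖ ≤ L * (t * ‖v‖) := by
        have := hlip (x + t • v) x
        simpa [norm_smul, abs_of_pos ht.1] using this
      have hinner : ⟪f' (x + t • v) - f' x, v⟫ = ⟪f' (x + t • v), v⟫ - ⟪f' x, v⟫ :=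
        inner_sub_left _ _ _
      nlinarith [norm_nonneg v, mul_nonneg (mul_nonneg hL.le (mul_nonneg ht.1.le
        (norm_nonneg v))) (norm_nonneg v)]
  have := hanti (Set.left_mem_Icc.2 zero_le_one) (Set.right_mem_Icc.2 zero_le_one) zero_le_one
  simp only [hh, one_smul, zero_smul, add_zero, one_pow, one_mul] at this
  have hyx : x + v = y := by rw [hv]; abel
  rw [hyx] at this
  linarith

/-- Cocoercivity (Baillon–Haddad). -/
lemma aux_cocoercive (f : E → ℝ) (f' : E → E) (L : ℝ) (hL : 0 < L)
    (hconv : ConvexOn ℝ Set.univ f) (hdiff : ∀ x, HasGradientAt f (f' x) x)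
    (hlip : ∀ x y, ‖f' x - f' y‖ ≤ L * ‖x - y‖) (x y : E) :
    (1 / L) * ‖f' x - f' y‖ ^ 2 ≤ ⟪f' x - f' y, x - y⟫ := by
  have key : ∀ a b : E, f b + ⟪f' b, a - b⟫ + 1 / (2 * L) * ‖f' a - f' b‖ ^ 2 ≤ f a := by
    intro a b
    set d := f' a - f' b with hd
    set z := a - (1 / L) • d with hz
    have h1 := aux_grad_ineq f f' hconv hdiff b z
    have h2 := aux_descent f f' L hL hdiff hlip a z
    have e1 : z - a = -((1 / L) • d) := by rw [hz]; abel
    have e2 : ⟪f' a, z - a⟫ = -(1 / L) * ⟪f' a, d⟫ := by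
      rw [e1, inner_neg_right, real_inner_smul_right]; ring
    have e3 : ‖z - a‖ ^ 2 = (1 / L) ^ 2 * ‖d‖ ^ 2 := by
      rw [e1, norm_neg, norm_smul]
      rw [Real.norm_eq_abs, abs_of_pos (by positivity)]
      ring
    have e4 : ⟪f' b, z - b⟫ = ⟪f' b, a - b⟫ - (1 / L) * ⟪f' b, d⟫ := by
      have : z - b = (a - b) - (1 / L) • d := by rw [hz]; abel
      rw [this, inner_sub_right, real_inner_smul_right]
    have e5 : ⟪f' a, d⟫ - ⟪f' b, d⟫ = ‖d‖ ^ 2 := by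
      rw [← inner_sub_left, ← hd, real_inner_self_eq_norm_sq]
    rw [e4] at h1
    rw [e2, e3] at h2
    have hL' : L ≠ 0 := ne_of_gt hL
    have e9 : L / 2 * ((1 / L) ^ 2 * ‖d‖ ^ 2) = 1 / (2 * L) * ‖d‖ ^ 2 := by
      field_simp
    have e10 : 1 / L * ⟪f' a, d⟫ - 1 / L * ⟪f' b, d⟫ = 1 / L * ‖d‖ ^ 2 := by
      rw [← mul_sub, e5]
    have e11 : 1 / L * ‖d‖ ^ 2 = 1 / (2 * L) * ‖d‖ ^ 2 + 1 / (2 * L) * ‖d‖ ^ 2 := by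
      field_simp; ring
    rw [e9] at h2
    linarith
  have k1 := key x y
  have k2 := key y x
  have e6 : ‖f' y - f' x‖ = ‖f' x - f' y‖ := norm_sub_rev _ _
  rw [e6] at k2
  have e7 : ⟪f' x, y - x⟫ = -⟪f' x, x - y⟫ := by rw [← inner_neg_right]; congr 1; abel
  have e8 : ⟪f' x - f' y, x - y⟫ = ⟪f' x, x - y⟫ - ⟪f' y, x - y⟫ := inner_sub_left _ _ _
  rw [e7] at k2
  have hLpos : (0:ℝ) < 2 * L := by linarith
  rw [e8]
  have : 1 / (2 * L) * ‖f' x - f' y‖ ^ 2 + 1 / (2 * L) * ‖f' x - f' y‖ ^ 2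
      = 1 / L * ‖f' x - f' y‖ ^ 2 := by field_simp; ring
  linarith

end Aux

/-- The gradient descent operator `Id - γ∇f` is firmly nonexpansive for `0 < γ < 1/L`. -/
theorem stmt_4 {E : Type*} [NormedAddCommGroup E] [InnerProductSpace ℝ E]
    [FiniteDimensional ℝ E]
    (f : E → ℝ) (f' : E → E) (L γ : ℝ) (hL : 0 < L)
    (hconv : ConvexOn ℝ Set.univ f)
    (hdiff : ∀ x, HasGradientAt f (f' x) x)
    (hlip : ∀ x y, ‖f' x - f' y‖ ≤ L * ‖x - y‖)
    (hγ0 : 0 < γ) (hγ : γ < 1 / L) :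
    ∀ x y : E,
      ‖(x - γ • f' x) - (y - γ • f' y)‖ ^ 2 + ‖γ • f' x - γ • f' y‖ ^ 2
        ≤ ‖x - y‖ ^ 2 := by
  intro x y
  have hco := aux_cocoercive f f' L hL hconv hdiff hlip x y
  set d := f' x - f' y with hd
  have e1 : (x - γ • f' x) - (y - γ • f' y) = (x - y) - γ • d := by rw [hd]; module
  have e2 : γ • f' x - γ • f' y = γ • d := by rw [hd]; module
  rw [e1, e2]
  have expand : ‖(x - y) - γ • d‖ ^ 2
      = ‖x - y‖ ^ 2 - 2 * γ * ⟪x - y, d⟫ + γ ^ 2 * ‖d‖ ^ 2 := by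
    rw [norm_sub_sq_real, real_inner_smul_right, norm_smul, Real.norm_eq_abs,
      abs_of_pos hγ0, mul_pow]
    ring
  have e3 : ‖γ • d‖ ^ 2 = γ ^ 2 * ‖d‖ ^ 2 := by
    rw [norm_smul, Real.norm_eq_abs, abs_of_pos hγ0, mul_pow]
  rw [expand, e3]
  have hsym : ⟪x - y, d⟫ = ⟪d, x - y⟫ := real_inner_comm _ _
  have hγL : γ ≤ 1 / L := le_of_lt hγ
  have h0 : (0:ℝ) ≤ ‖d‖ ^ 2 := sq_nonneg _
  have hchain : γ * ‖d‖ ^ 2 ≤ ⟪x - y, d⟫ := by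
    rw [hsym]
    linarith [mul_le_mul_of_nonneg_right hγL h0]
  nlinarith [mul_le_mul_of_nonneg_left hchain (by positivity : (0:ℝ) ≤ 2 * γ)]
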